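/- arXiv:2208.14373 — 3 statements merged into one kernel-verified Lean document; each statement's English description precedes it below -/
import Mathlib

section
/- Conservation of momentum under the Hermite-basis change-of-parameters map (Proposition, part (ii)): Let N ∈ ℕ with N ≥ 1, let α', α > 0 and u', u ∈ ℝ, and let c_0, …, c_N be real numbers. Define f(v) := Σ_{m=0}^N c_m·ψ_m^{α',u'}(v) and g(v) := Σ_{n=0}^N (Σ_{m=0}^N ℙ_{n,m}·c_m)·ψ_n^{α,u}(v). Then ∫_ℝ v·g(v) dv = ∫_ℝ v·f(v) dv. -/
open MeasureTheory Real Finset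

/-- Physicists' Hermite polynomials: `H 0 x = 1`, `H 1 x = 2x`,
`H (n+1) x = 2x · H n x − 2n · H (n−1) x`. -/
noncomputable def physHermite : ℕ → ℝ → ℝ
  | 0 => fun _ => 1
  | 1 => fun x => 2 * x
  | (n + 2) => fun x => 2 * x * physHermite (n + 1) x - 2 * ((n : ℝ) + 1) * physHermite n x

/-- Asymmetrically weighted Hermite function
`ψ_n^{α,u}(v) = (π·2^n·n!)^{-1/2} · H_n((v−u)/α) · exp(−((v−u)/α)²)`. -/
noncomputable def awHermite (α u : ℝ) (n : ℕ) (v : ℝ) : ℝ :=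
  (Real.sqrt (Real.pi * 2 ^ n * (n.factorial : ℝ)))⁻¹ * physHermite n ((v - u) / α) *
    Real.exp (-((v - u) / α) ^ 2)

/-- The weight `ω(v) = √π · α⁻¹ · exp(((v−u)/α)²)`. -/
noncomputable def hermiteWeight (α u : ℝ) (v : ℝ) : ℝ :=
  Real.sqrt Real.pi * α⁻¹ * Real.exp (((v - u) / α) ^ 2)

/-- Transformation matrix entries `ℙ_{n,m} = ∫ ψ_m^{α',u'}(v) · ψ_n^{α,u}(v) · ω(v) dv`. -/
noncomputable def transferMatrix (α' u' α u : ℝ) (n m : ℕ) : ℝ :=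
  ∫ v : ℝ, awHermite α' u' m v * awHermite α u n v * hermiteWeight α u v

set_option linter.unusedTactic false
set_option linter.unreachableTactic false
set_option linter.unusedSectionVars false


lemma physHermite_zero (x : ℝ) : physHermite 0 x = 1 := rfl
lemma physHermite_one (x : ℝ) : physHermite 1 x = 2 * x := rfl
lemma physHermite_add_two (n : ℕ) (x : ℝ) :
    physHermite (n + 2) x = 2 * x * physHermite (n + 1) x - 2 * ((n : ℝ) + 1) * physHermite n x := rfl

lemma physHermite_succ (n : ℕ) (x : ℝ) :
    physHermite (n + 1) x = 2 * x * physHermite n x - 2 * (n : ℝ) * physHermite (n - 1) x := by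
  cases n with
  | zero => simp [physHermite_zero, physHermite_one]
  | succ m => simpa using physHermite_add_two m x

lemma physHermite_poly : ∀ n : ℕ,
    (∃ p : Polynomial ℝ, ∀ x, physHermite n x = p.eval x) ∧
    (∃ p : Polynomial ℝ, ∀ x, physHermite (n + 1) x = p.eval x)
  | 0 => ⟨⟨1, by simp [physHermite_zero]⟩, ⟨2 * Polynomial.X, by simp [physHermite_one]⟩⟩
  | (n + 1) => by
    obtain ⟨⟨p, hp⟩, ⟨q, hq⟩⟩ := physHermite_poly n
    refine ⟨⟨q, hq⟩, ⟨2 * Polynomial.X * q - Polynomial.C (2 * ((n : ℝ) + 1)) * p, fun x => ?_⟩⟩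
    simp [physHermite_add_two, hp, hq]

lemma physHermite_hasDerivAt_aux : ∀ n : ℕ,
    (∀ x : ℝ, HasDerivAt (physHermite n) (2 * (n : ℝ) * physHermite (n - 1) x) x) ∧
    (∀ x : ℝ, HasDerivAt (physHermite (n + 1)) (2 * ((n : ℝ) + 1) * physHermite n x) x)
  | 0 => by
    constructor
    · intro x; have h0 : HasDerivAt (physHermite 0) 0 x := hasDerivAt_const x (1 : ℝ)
      simpa using h0
    · intro x
      have : HasDerivAt (fun x : ℝ => 2 * x) 2 x := by
        simpa using (hasDerivAt_id x).const_mul (2 : ℝ)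
      have he : (fun x : ℝ => 2 * x) = physHermite 1 := by funext y; rw [physHermite_one]
      rw [he] at this
      convert this using 1
      simp [physHermite_zero]
  | (n + 1) => by
    obtain ⟨hp, hq⟩ := physHermite_hasDerivAt_aux n
    refine ⟨by simpa using hq, fun x => ?_⟩
    have h1 : HasDerivAt (fun y : ℝ => 2 * y * physHermite (n + 1) y
        - 2 * ((n : ℝ) + 1) * physHermite n y)
        (2 * physHermite (n + 1) x + 2 * x * (2 * ((n : ℝ) + 1) * physHermite n x)
          - 2 * ((n : ℝ) + 1) * (2 * (n : ℝ) * physHermite (n - 1) x)) x := by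
      have ha : HasDerivAt (fun y : ℝ => 2 * y) 2 x := by
        simpa using (hasDerivAt_id x).const_mul (2 : ℝ)
      have hmul := ha.mul (hq x)
      have hc := ((hp x).const_mul (2 * ((n : ℝ) + 1)))
      refine (hmul.sub hc).congr_deriv ?_
      all_goals ring
    have h2 : (fun y : ℝ => 2 * y * physHermite (n + 1) y
        - 2 * ((n : ℝ) + 1) * physHermite n y) = physHermite (n + 2) := by
      funext y; rw [physHermite_add_two]
    rw [h2] at h1
    convert h1 using 1
    rw [physHermite_succ n x]
    push_cast
    ring

lemma physHermite_hasDerivAt (n : ℕ) (x : ℝ) :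
    HasDerivAt (physHermite n) (2 * (n : ℝ) * physHermite (n - 1) x) x :=
  (physHermite_hasDerivAt_aux n).1 x

section Analysis
open Polynomial

lemma integrable_poly_gaussian_zero (q : Polynomial ℝ) {b : ℝ} (hb : 0 < b) :
    Integrable (fun x : ℝ => q.eval x * Real.exp (-b * x ^ 2)) := by
  induction q using Polynomial.induction_on' with
  | add p q hp hq => exact (hp.add hq).congr (by filter_upwards with x; simp [add_mul])
  | monomial n a =>
    have h : Integrable (fun x : ℝ => x ^ n * Real.exp (-b * x ^ 2)) := by
      have := integrable_rpow_mul_exp_neg_mul_sq hb (s := (n : ℝ))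
        ((by norm_num : (-1:ℝ) < 0).trans_le (Nat.cast_nonneg n))
      simpa [Real.rpow_natCast] using this
    simpa [Polynomial.eval_monomial, mul_assoc] using h.const_mul a

lemma integrable_poly_gaussian (p : Polynomial ℝ) {b : ℝ} (hb : 0 < b) (u : ℝ) :
    Integrable (fun v : ℝ => p.eval v * Real.exp (-b * (v - u) ^ 2)) := by
  have h := (integrable_poly_gaussian_zero (p.comp (Polynomial.X + Polynomial.C u)) hb).comp_sub_right u
  simpa [Polynomial.eval_comp] using h

end Analysis

section Param

variable {α u : ℝ} (hα : 0 < α)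

lemma exp_arg_eq (v : ℝ) :
    Real.exp (-((v - u) / α) ^ 2) = Real.exp (-(α ^ 2)⁻¹ * (v - u) ^ 2) := by
  congr 1
  rw [div_pow]
  ring

include hα

/-- integrability of polynomial × Hermite-Gaussian -/
lemma integrable_poly_hermite (q : Polynomial ℝ) (n : ℕ) :
    Integrable (fun v : ℝ =>
      q.eval v * (physHermite n ((v - u) / α) * Real.exp (-((v - u) / α) ^ 2))) := by
  obtain ⟨p, hp⟩ := (physHermite_poly n).1
  have hb : (0 : ℝ) < (α ^ 2)⁻¹ := by positivity
  have h := integrable_poly_gaussian (q * p.comp (Polynomial.C α⁻¹ * (Polynomial.X - Polynomial.C u))) hb u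
  refine h.congr ?_
  filter_upwards with v
  rw [exp_arg_eq]
  simp only [Polynomial.eval_mul, Polynomial.eval_comp, Polynomial.eval_C, Polynomial.eval_sub,
    Polynomial.eval_X]
  rw [hp]
  ring_nf

omit hα in
lemma g_hasDerivAt (n : ℕ) (v : ℝ) :
    HasDerivAt (fun w : ℝ => physHermite n ((w - u) / α) * Real.exp (-((w - u) / α) ^ 2))
      (-α⁻¹ * (physHermite (n + 1) ((v - u) / α) * Real.exp (-((v - u) / α) ^ 2))) v := by
  have hin : HasDerivAt (fun w : ℝ => (w - u) / α) α⁻¹ v := by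
    simpa [div_eq_mul_inv] using ((hasDerivAt_id v).sub_const u).div_const α
  set x := (v - u) / α with hx
  have hH : HasDerivAt (fun w : ℝ => physHermite n ((w - u) / α))
      (2 * (n : ℝ) * physHermite (n - 1) x * α⁻¹) v :=
    (physHermite_hasDerivAt n x).comp v hin
  have hsq : HasDerivAt (fun w : ℝ => -((w - u) / α) ^ 2) (-(2 * x * α⁻¹)) v := by
    have this : HasDerivAt (fun w : ℝ => -((w - u) / α) ^ 2) _ v := (hin.pow 2).neg
    simpa [hx, mul_comm, mul_assoc, mul_left_comm] using this
  have hE : HasDerivAt (fun w : ℝ => Real.exp (-((w - u) / α) ^ 2))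
      (Real.exp (-x ^ 2) * (-(2 * x * α⁻¹))) v := by
    have hc := (Real.hasDerivAt_exp (-x ^ 2)).comp v hsq
    have hc' : HasDerivAt (fun w : ℝ => Real.exp (-((w - u) / α) ^ 2)) _ v := hc
    simpa [hx] using hc'
  have h := hH.mul hE
  refine h.congr_deriv ?_
  rw [physHermite_succ n x]
  ring

end Param

section Integrals

variable {α u : ℝ} (hα : 0 < α)

include hα

lemma sqrt_pi_pos : (0:ℝ) < Real.sqrt Real.pi := Real.sqrt_pos.mpr Real.pi_pos

lemma I_zero : (∫ v : ℝ, Real.exp (-((v - u) / α) ^ 2)) = α * Real.sqrt Real.pi := by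
  have hb : (0 : ℝ) < (α ^ 2)⁻¹ := by positivity
  calc (∫ v : ℝ, Real.exp (-((v - u) / α) ^ 2))
      = ∫ v : ℝ, Real.exp (-(α ^ 2)⁻¹ * (v - u) ^ 2) := by
        congr 1; funext v; exact exp_arg_eq v
    _ = ∫ v : ℝ, Real.exp (-(α ^ 2)⁻¹ * v ^ 2) :=
        integral_sub_right_eq_self (fun v => Real.exp (-(α ^ 2)⁻¹ * v ^ 2)) u
    _ = Real.sqrt (Real.pi / (α ^ 2)⁻¹) := integral_gaussian _
    _ = α * Real.sqrt Real.pi := by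
        have h : Real.pi / (α ^ 2)⁻¹ = α ^ 2 * Real.pi := by field_simp
        rw [h, Real.sqrt_mul (sq_nonneg α), Real.sqrt_sq hα.le]

lemma I_succ (n : ℕ) :
    (∫ v : ℝ, physHermite (n + 1) ((v - u) / α) * Real.exp (-((v - u) / α) ^ 2)) = 0 := by
  have hint : Integrable (fun v : ℝ =>
      -α⁻¹ * (physHermite (n + 1) ((v - u) / α) * Real.exp (-((v - u) / α) ^ 2))) := by
    exact ((integrable_poly_hermite (u := u) hα 1 (n + 1)).congr
      (by filter_upwards with v; simp)).const_mul (-α⁻¹)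
  have h0 := integral_eq_zero_of_hasDerivAt_of_integrable (fun v => g_hasDerivAt (α := α) (u := u) n v)
    hint ((integrable_poly_hermite (u := u) hα 1 n).congr (by filter_upwards with v; simp))
  rw [integral_const_mul] at h0
  rcases mul_eq_zero.mp h0 with h | h
  · exact absurd h (by simp [hα.ne'])
  · exact h

lemma J_succ (n : ℕ) :
    (∫ v : ℝ, v * (physHermite (n + 1) ((v - u) / α) * Real.exp (-((v - u) / α) ^ 2)))
      = α * ∫ v : ℝ, physHermite n ((v - u) / α) * Real.exp (-((v - u) / α) ^ 2) := by
  set g : ℕ → ℝ → ℝ := fun n v => physHermite n ((v - u) / α) * Real.exp (-((v - u) / α) ^ 2)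
    with hg
  have hgint : ∀ m, Integrable (g m) := fun m =>
    (integrable_poly_hermite (u := u) hα 1 m).congr (by filter_upwards with v; simp [hg])
  have hvgint : ∀ m, Integrable (fun v => v * g m v) := fun m =>
    (integrable_poly_hermite (u := u) hα Polynomial.X m).congr (by filter_upwards with v; simp [hg])
  have hF : ∀ v : ℝ, HasDerivAt (fun w => w * g n w)
      (g n v + v * (-α⁻¹ * g (n + 1) v)) v := by
    intro v
    have hd : HasDerivAt (fun w => w * g n w) _ v :=
      (hasDerivAt_id v).mul (g_hasDerivAt (α := α) (u := u) n v)
    simpa using hd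
  have hint : Integrable (fun v : ℝ => g n v + v * (-α⁻¹ * g (n + 1) v)) := by
    refine (hgint n).add ?_
    refine ((hvgint (n + 1)).const_mul (-α⁻¹)).congr ?_
    filter_upwards with v; ring
  have h0 := integral_eq_zero_of_hasDerivAt_of_integrable hF hint (hvgint n)
  rw [integral_add (hgint n) (((hvgint (n + 1)).const_mul (-α⁻¹)).congr
    (by filter_upwards with v; ring))] at h0
  have h1 : (∫ v : ℝ, v * (-α⁻¹ * g (n + 1) v)) = -α⁻¹ * ∫ v : ℝ, v * g (n + 1) v := by
    rw [← integral_const_mul]; congr 1; funext v; ring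
  rw [h1] at h0
  have h2 : α⁻¹ * (∫ v : ℝ, v * g (n + 1) v) = ∫ v : ℝ, g n v := by linarith
  calc (∫ v : ℝ, v * g (n + 1) v) = α * (α⁻¹ * ∫ v : ℝ, v * g (n + 1) v) := by
        field_simp
    _ = α * ∫ v : ℝ, g n v := by rw [h2]

lemma J_zero :
    (∫ v : ℝ, v * Real.exp (-((v - u) / α) ^ 2)) = u * (α * Real.sqrt Real.pi) := by
  set g : ℕ → ℝ → ℝ := fun n v => physHermite n ((v - u) / α) * Real.exp (-((v - u) / α) ^ 2)
    with hg
  have hgint : ∀ m, Integrable (g m) := fun m =>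
    (integrable_poly_hermite (u := u) hα 1 m).congr (by filter_upwards with v; simp [hg])
  have key : ∀ v : ℝ, v * Real.exp (-((v - u) / α) ^ 2) = u * g 0 v + (α / 2) * g 1 v := by
    intro v
    simp only [hg, physHermite_zero, physHermite_one]
    field_simp
    ring
  calc (∫ v : ℝ, v * Real.exp (-((v - u) / α) ^ 2))
      = ∫ v : ℝ, u * g 0 v + (α / 2) * g 1 v := by congr 1; funext v; exact key v
    _ = u * (∫ v : ℝ, g 0 v) + (α / 2) * ∫ v : ℝ, g 1 v := by
        rw [integral_add ((hgint 0).const_mul u) ((hgint 1).const_mul (α / 2)),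
          integral_const_mul, integral_const_mul]
    _ = u * (α * Real.sqrt Real.pi) := by
        have h1 : (∫ v : ℝ, g 1 v) = 0 := I_succ hα 0
        have h0 : (∫ v : ℝ, g 0 v) = α * Real.sqrt Real.pi := by
          have := I_zero (α := α) (u := u) hα
          simpa [hg, physHermite_zero] using this
        rw [h0, h1]; ring

end Integrals

section AW

variable {α u : ℝ} (hα : 0 < α)

lemma awHermite_eq (n : ℕ) (v : ℝ) :
    awHermite α u n v = (Real.sqrt (Real.pi * 2 ^ n * (n.factorial : ℝ)))⁻¹ *
      (physHermite n ((v - u) / α) * Real.exp (-((v - u) / α) ^ 2)) := by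
  rw [awHermite]; ring

include hα

lemma integrable_aw (n : ℕ) : Integrable (awHermite α u n) := by
  refine ((integrable_poly_hermite (u := u) hα 1 n).const_mul
    ((Real.sqrt (Real.pi * 2 ^ n * (n.factorial : ℝ)))⁻¹)).congr ?_
  filter_upwards with v
  rw [awHermite_eq]; simp

lemma integrable_id_mul_aw (n : ℕ) : Integrable (fun v => v * awHermite α u n v) := by
  refine ((integrable_poly_hermite (u := u) hα Polynomial.X n).const_mul
    ((Real.sqrt (Real.pi * 2 ^ n * (n.factorial : ℝ)))⁻¹)).congr ?_
  filter_upwards with v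
  rw [awHermite_eq]; simp; ring

lemma norm_aw_zero : (∫ v : ℝ, awHermite α u 0 v) = α := by
  have h : (∫ v : ℝ, awHermite α u 0 v)
      = (Real.sqrt Real.pi)⁻¹ * ∫ v : ℝ, Real.exp (-((v - u) / α) ^ 2) := by
    rw [← integral_const_mul]
    congr 1; funext v
    rw [awHermite_eq]
    simp [physHermite_zero]
  rw [h, I_zero hα]
  have : Real.sqrt Real.pi ≠ 0 := (sqrt_pi_pos hα).ne'
  field_simp

lemma norm_aw_succ (n : ℕ) : (∫ v : ℝ, awHermite α u (n + 1) v) = 0 := by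
  have h : (∫ v : ℝ, awHermite α u (n + 1) v)
      = (Real.sqrt (Real.pi * 2 ^ (n+1) * ((n+1).factorial : ℝ)))⁻¹ *
        ∫ v : ℝ, physHermite (n + 1) ((v - u) / α) * Real.exp (-((v - u) / α) ^ 2) := by
    rw [← integral_const_mul]
    congr 1; funext v
    rw [awHermite_eq]
  rw [h, I_succ hα, mul_zero]

lemma mom_aw_zero : (∫ v : ℝ, v * awHermite α u 0 v) = u * α := by
  have h : (∫ v : ℝ, v * awHermite α u 0 v)
      = (Real.sqrt Real.pi)⁻¹ * ∫ v : ℝ, v * Real.exp (-((v - u) / α) ^ 2) := by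
    rw [← integral_const_mul]
    congr 1; funext v
    rw [awHermite_eq]
    simp [physHermite_zero]
    ring
  rw [h, J_zero hα]
  have : Real.sqrt Real.pi ≠ 0 := (sqrt_pi_pos hα).ne'
  field_simp

lemma mom_aw_one : (∫ v : ℝ, v * awHermite α u 1 v) = α ^ 2 / Real.sqrt 2 := by
  have h : (∫ v : ℝ, v * awHermite α u 1 v)
      = (Real.sqrt (Real.pi * 2))⁻¹ *
        ∫ v : ℝ, v * (physHermite 1 ((v - u) / α) * Real.exp (-((v - u) / α) ^ 2)) := by
    rw [← integral_const_mul]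
    congr 1; funext v
    rw [awHermite_eq]
    norm_num
    ring
  rw [h, J_succ hα 0]
  have h0 : (∫ v : ℝ, physHermite 0 ((v - u) / α) * Real.exp (-((v - u) / α) ^ 2))
      = α * Real.sqrt Real.pi := by
    have := I_zero (α := α) (u := u) hα
    rw [← this]
    congr 1; funext v; simp [physHermite_zero]
  rw [h0]
  rw [Real.sqrt_mul Real.pi_pos.le]
  have h1 : Real.sqrt Real.pi ≠ 0 := (sqrt_pi_pos hα).ne'
  have h2 : Real.sqrt 2 ≠ 0 := by positivity
  field_simp

lemma mom_aw_succ_succ (n : ℕ) : (∫ v : ℝ, v * awHermite α u (n + 2) v) = 0 := by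
  have h : (∫ v : ℝ, v * awHermite α u (n + 2) v)
      = (Real.sqrt (Real.pi * 2 ^ (n+2) * ((n+2).factorial : ℝ)))⁻¹ *
        ∫ v : ℝ, v * (physHermite (n + 2) ((v - u) / α) * Real.exp (-((v - u) / α) ^ 2)) := by
    rw [← integral_const_mul]
    congr 1; funext v
    rw [awHermite_eq]
    ring
  rw [h, J_succ hα (n + 1), I_succ hα n, mul_zero, mul_zero]

end AW

section TM

variable {α' α u' u : ℝ} (hα' : 0 < α') (hα : 0 < α)

lemma aw_mul_weight (n : ℕ) (v : ℝ) :
    awHermite α u n v * hermiteWeight α u v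
      = (Real.sqrt (Real.pi * 2 ^ n * (n.factorial : ℝ)))⁻¹ * Real.sqrt Real.pi * α⁻¹ *
        physHermite n ((v - u) / α) := by
  have hcancel : Real.exp (-((v - u) / α) ^ 2) * Real.exp (((v - u) / α) ^ 2) = 1 := by
    rw [← Real.exp_add]; simp
  calc awHermite α u n v * hermiteWeight α u v
      = (Real.sqrt (Real.pi * 2 ^ n * (n.factorial : ℝ)))⁻¹ * Real.sqrt Real.pi * α⁻¹ *
        physHermite n ((v - u) / α) *
        (Real.exp (-((v - u) / α) ^ 2) * Real.exp (((v - u) / α) ^ 2)) := by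
        rw [awHermite, hermiteWeight]; ring
    _ = _ := by rw [hcancel, mul_one]

include hα hα'

lemma tm_zero_zero : transferMatrix α' u' α u 0 0 = α' / α := by
  have h : transferMatrix α' u' α u 0 0 = (∫ v : ℝ, awHermite α' u' 0 v) * α⁻¹ := by
    rw [transferMatrix, ← integral_mul_const]
    congr 1; funext v
    rw [mul_assoc, aw_mul_weight]
    simp [physHermite_zero, (sqrt_pi_pos hα).ne']
  rw [h, norm_aw_zero hα']
  rw [div_eq_mul_inv]

lemma tm_zero_succ (m : ℕ) : transferMatrix α' u' α u 0 (m + 1) = 0 := by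
  have h : transferMatrix α' u' α u 0 (m + 1) = (∫ v : ℝ, awHermite α' u' (m + 1) v) * α⁻¹ := by
    rw [transferMatrix, ← integral_mul_const]
    congr 1; funext v
    rw [mul_assoc, aw_mul_weight]
    simp [physHermite_zero, (sqrt_pi_pos hα).ne']
  rw [h, norm_aw_succ hα', zero_mul]

lemma tm_one_eq (m : ℕ) : transferMatrix α' u' α u 1 m
    = Real.sqrt 2 * α⁻¹ * α⁻¹ *
      ((∫ v : ℝ, v * awHermite α' u' m v) - u * ∫ v : ℝ, awHermite α' u' m v) := by
  have hC : (Real.sqrt (Real.pi * 2 ^ 1 * (Nat.factorial 1 : ℝ)))⁻¹ * Real.sqrt Real.pi * 2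
      = Real.sqrt 2 := by
    rw [show (Real.pi * 2 ^ 1 * (Nat.factorial 1 : ℝ)) = Real.pi * 2 by norm_num,
      Real.sqrt_mul Real.pi_pos.le]
    have h1 : Real.sqrt Real.pi ≠ 0 := (sqrt_pi_pos hα).ne'
    have h2 : Real.sqrt 2 * Real.sqrt 2 = 2 := Real.mul_self_sqrt (by norm_num)
    field_simp
    linear_combination (-1 : ℝ) * h2
  have h : transferMatrix α' u' α u 1 m
      = Real.sqrt 2 * α⁻¹ * α⁻¹ *
        ∫ v : ℝ, (v * awHermite α' u' m v - u * awHermite α' u' m v) := by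
    rw [transferMatrix, ← integral_const_mul]
    congr 1; funext v
    rw [mul_assoc, aw_mul_weight]
    rw [physHermite_one]
    rw [← hC]
    field_simp
  rw [h, integral_sub (integrable_id_mul_aw hα' m) ((integrable_aw hα' m).const_mul u),
    integral_const_mul]

lemma tm_one_zero : transferMatrix α' u' α u 1 0
    = Real.sqrt 2 * α' * (u' - u) * α⁻¹ * α⁻¹ := by
  rw [tm_one_eq hα' hα, mom_aw_zero hα', norm_aw_zero hα']
  ring

lemma tm_one_one : transferMatrix α' u' α u 1 1 = α' ^ 2 * α⁻¹ * α⁻¹ := by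
  rw [tm_one_eq hα' hα, mom_aw_one hα', norm_aw_succ hα']
  have h2 : Real.sqrt 2 * Real.sqrt 2 = 2 := Real.mul_self_sqrt (by norm_num)
  have h2' : Real.sqrt 2 ≠ 0 := by positivity
  field_simp
  linarith

lemma tm_one_succ_succ (m : ℕ) : transferMatrix α' u' α u 1 (m + 2) = 0 := by
  rw [tm_one_eq hα' hα, mom_aw_succ_succ hα', norm_aw_succ hα']
  ring

end TM

/-- Conservation of momentum under the Hermite-basis change-of-parameters map. -/
theorem momentum_conservation_change_of_basis (N : ℕ) (hN : 1 ≤ N) (α' α u' u : ℝ)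
    (hα' : 0 < α') (hα : 0 < α) (c : ℕ → ℝ) :
    (∫ v : ℝ, v * ∑ n ∈ Finset.range (N + 1),
        (∑ m ∈ Finset.range (N + 1), transferMatrix α' u' α u n m * c m) * awHermite α u n v)
      = ∫ v : ℝ, v * ∑ m ∈ Finset.range (N + 1), c m * awHermite α' u' m v := by
  have expand : ∀ (β w : ℝ), 0 < β → ∀ d : ℕ → ℝ,
      (∫ v : ℝ, v * ∑ n ∈ Finset.range (N + 1), d n * awHermite β w n v)
        = ∑ n ∈ Finset.range (N + 1), d n * ∫ v : ℝ, v * awHermite β w n v := by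
    intro β w hβ d
    have h1 : (fun v : ℝ => v * ∑ n ∈ Finset.range (N + 1), d n * awHermite β w n v)
        = fun v => ∑ n ∈ Finset.range (N + 1), d n * (v * awHermite β w n v) := by
      funext v; rw [Finset.mul_sum]; exact Finset.sum_congr rfl fun n _ => by ring
    rw [h1, integral_finset_sum _ (fun n _ => (integrable_id_mul_aw hβ n).const_mul (d n))]
    exact Finset.sum_congr rfl fun n _ => integral_const_mul _ _
  rw [expand α u hα _, expand α' u' hα' c]
  have hsub2 : Finset.range 2 ⊆ Finset.range (N + 1) := by
    apply Finset.range_subset_range.mpr; omega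
  -- reduce a sum with vanishing tail (for n ≥ 2) to its first two terms
  have reduce2 : ∀ f : ℕ → ℝ, (∀ k : ℕ, f (k + 2) = 0) →
      ∑ n ∈ Finset.range (N + 1), f n = f 0 + f 1 := by
    intro f hf
    rw [← Finset.sum_subset hsub2 (fun x _ hx2 => ?_)]
    · rw [Finset.sum_range_succ, Finset.sum_range_one]
    · obtain ⟨k, rfl⟩ := Nat.exists_eq_add_of_le' (show 2 ≤ x by simp at hx2; omega)
      exact hf k
  rw [reduce2 (fun n => (∑ m ∈ Finset.range (N + 1), transferMatrix α' u' α u n m * c m) *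
        ∫ v : ℝ, v * awHermite α u n v) (fun k => by simp only [mom_aw_succ_succ hα, mul_zero]),
    reduce2 (fun m => c m * ∫ v : ℝ, v * awHermite α' u' m v)
      (fun k => by simp only [mom_aw_succ_succ hα', mul_zero])]
  -- evaluate the transfer-matrix rows
  have hT0 : (∑ m ∈ Finset.range (N + 1), transferMatrix α' u' α u 0 m * c m)
      = (α' / α) * c 0 := by
    have h : ∑ m ∈ Finset.range (N + 1), transferMatrix α' u' α u 0 m * c m
        = ∑ m ∈ Finset.range 1, transferMatrix α' u' α u 0 m * c m := by
      refine (Finset.sum_subset (by apply Finset.range_subset_range.mpr; omega)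
        (fun x _ hx1 => ?_)).symm
      obtain ⟨k, rfl⟩ := Nat.exists_eq_add_of_le' (show 1 ≤ x by simp at hx1; omega)
      rw [tm_zero_succ hα' hα, zero_mul]
    rw [h, Finset.sum_range_one, tm_zero_zero hα' hα]
  have hT1 : (∑ m ∈ Finset.range (N + 1), transferMatrix α' u' α u 1 m * c m)
      = Real.sqrt 2 * α' * (u' - u) * α⁻¹ * α⁻¹ * c 0 + α' ^ 2 * α⁻¹ * α⁻¹ * c 1 := by
    rw [reduce2 (fun m => transferMatrix α' u' α u 1 m * c m)
      (fun k => by simp only [tm_one_succ_succ hα' hα, zero_mul]),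
      tm_one_zero hα' hα, tm_one_one hα' hα]
  rw [hT0, hT1, mom_aw_zero hα, mom_aw_one hα, mom_aw_zero hα', mom_aw_one hα']
  have h2 : Real.sqrt 2 * Real.sqrt 2 = 2 := Real.mul_self_sqrt (by norm_num)
  have h2' : Real.sqrt 2 ≠ 0 := by positivity
  field_simp
  ring
end

section
/- The weighted orthogonal projection between Hermite approximation spaces preserves all polynomial moments up to degree N: Let N ∈ ℕ, α', α > 0, u', u ∈ ℝ, and set ω(v) := √π·α^{−1}·e^{((v−u)/α)²}. Suppose f is a real linear combination of ψ_0^{α',u'}, …, ψ_N^{α',u'} and g is a real linear combination of ψ_0^{α,u}, …, ψ_N^{α,u} such that ∫_ℝ (g(v) − f(v))·ψ_n^{α,u}(v)·ω(v) dv = 0 for every 0 ≤ n ≤ N. Then for every real polynomial p of degree at most N, ∫_ℝ g(v)·p(v) dv = ∫_ℝ f(v)·p(v) dv. -/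
open MeasureTheory Real Finset

open Polynomial in
/-- Polynomial version of the physicists' Hermite polynomials. -/
noncomputable def PH : ℕ → Polynomial ℝ
  | 0 => 1
  | 1 => Polynomial.C 2 * Polynomial.X
  | (n + 2) => Polynomial.C 2 * Polynomial.X * PH (n + 1) - Polynomial.C (2 * ((n : ℝ) + 1)) * PH n

lemma PH_eval : ∀ n : ℕ, ∀ x : ℝ, (PH n).eval x = physHermite n x := by
  intro n
  induction n using Nat.strong_induction_on with
  | _ n ih =>
    match n with
    | 0 => intro x; simp [PH, physHermite]
    | 1 => intro x; simp [PH, physHermite]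
    | (m + 2) =>
      intro x
      simp only [PH, physHermite, Polynomial.eval_sub, Polynomial.eval_mul, Polynomial.eval_C,
        Polynomial.eval_X, ih (m + 1) (by omega), ih m (by omega)]

open Polynomial in
lemma PH_natDegree_le : ∀ n : ℕ, (PH n).natDegree ≤ n := by
  intro n
  induction n using Nat.strong_induction_on with
  | _ n ih =>
    match n with
    | 0 => simp [PH]
    | 1 =>
      calc (PH 1).natDegree ≤ (Polynomial.C (2:ℝ)).natDegree + Polynomial.X.natDegree :=
            natDegree_mul_le
        _ ≤ 1 := by simp
    | (m + 2) =>
      have h1 : (Polynomial.C (2:ℝ) * Polynomial.X * PH (m + 1)).natDegree ≤ m + 2 := by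
        refine natDegree_mul_le.trans ?_
        have ha : (Polynomial.C (2:ℝ) * Polynomial.X).natDegree ≤ 1 :=
          natDegree_mul_le.trans (by simp)
        have := ih (m + 1) (by omega)
        omega
      have h2 : (Polynomial.C (2 * ((m : ℝ) + 1)) * PH m).natDegree ≤ m + 2 := by
        refine (natDegree_C_mul_le _ _).trans ?_
        have := ih m (by omega); omega
      exact (natDegree_sub_le _ _).trans (max_le h1 h2)

open Polynomial in
lemma PH_coeff : ∀ n : ℕ, (PH n).coeff n = 2 ^ n := by
  intro n
  induction n using Nat.strong_induction_on with
  | _ n ih =>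
    match n with
    | 0 => simp [PH]
    | 1 => simp [PH]
    | (m + 2) =>
      have hz : (PH m).coeff (m + 2) = 0 :=
        coeff_eq_zero_of_natDegree_lt (lt_of_le_of_lt (PH_natDegree_le m) (by omega))
      have hx : (Polynomial.C (2:ℝ) * Polynomial.X * PH (m + 1)).coeff (m + 2)
          = 2 * (PH (m + 1)).coeff (m + 1) := by
        rw [mul_assoc, coeff_C_mul, coeff_X_mul]
      rw [show PH (m + 2) = Polynomial.C (2:ℝ) * Polynomial.X * PH (m + 1)
            - Polynomial.C (2 * ((m : ℝ) + 1)) * PH m from rfl]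
      rw [coeff_sub, hx, coeff_C_mul, hz, ih (m + 1) (by omega)]
      ring

open Polynomial in
lemma PH_natDegree (n : ℕ) : (PH n).natDegree = n := by
  refine le_antisymm (PH_natDegree_le n) (le_natDegree_of_ne_zero ?_)
  rw [PH_coeff n]; positivity

open Polynomial in
lemma PH_leadingCoeff (n : ℕ) : (PH n).leadingCoeff = 2 ^ n := by
  rw [leadingCoeff, PH_natDegree, PH_coeff]

lemma abs_pow_le_aux (n : ℕ) (x : ℝ) : |x| ^ n ≤ x ^ (2 * n) + 1 := by
  have h2 : x ^ (2 * n) = |x| ^ (2 * n) := by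
    rw [pow_mul, pow_mul, sq_abs]
  rcases le_or_gt (|x|) 1 with h | h
  · have : |x| ^ n ≤ 1 := pow_le_one₀ (abs_nonneg x) h
    have : (0:ℝ) ≤ x ^ (2*n) := by rw [h2]; positivity
    linarith
  · have h1 : |x| ^ n ≤ |x| ^ (2 * n) := pow_le_pow_right₀ h.le (by omega)
    rw [h2]; linarith

lemma integrable_pow_mul_gaussian {b : ℝ} (hb : 0 < b) (n : ℕ) :
    Integrable (fun x : ℝ => x ^ n * Real.exp (-b * x ^ 2)) := by
  have hb2 : 0 < b / 2 := by linarith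
  set C : ℝ := (n.factorial : ℝ) * (2 / b) ^ n + 1 with hC
  refine Integrable.mono' ((integrable_exp_neg_mul_sq hb2).const_mul C) ?_ ?_
  · exact ((continuous_pow n).mul (by continuity)).aestronglyMeasurable
  · filter_upwards with x
    have hx2 : (0:ℝ) ≤ b / 2 * x ^ 2 := by positivity
    have h1 : (b / 2 * x ^ 2) ^ n / (n.factorial : ℝ) ≤ Real.exp (b / 2 * x ^ 2) :=
      Real.pow_div_factorial_le_exp _ hx2 n
    have hfac : (0:ℝ) < (n.factorial : ℝ) := by positivity
    have e1 : (b / 2 * x ^ 2) ^ n = (b / 2) ^ n * x ^ (2 * n) := by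
      rw [mul_pow, ← pow_mul]
    have h2 : x ^ (2 * n) ≤ (n.factorial : ℝ) * (2 / b) ^ n * Real.exp (b / 2 * x ^ 2) := by
      rw [div_le_iff₀ hfac, e1] at h1
      have h3 : (2 / b) ^ n * ((b / 2) ^ n * x ^ (2*n))
          ≤ (2 / b) ^ n * (Real.exp (b / 2 * x ^ 2) * (n.factorial : ℝ)) :=
        mul_le_mul_of_nonneg_left h1 (by positivity)
      have h4 : (2 / b : ℝ) ^ n * (b / 2) ^ n = 1 := by
        rw [← mul_pow]; field_simp; exact one_pow n
      calc x ^ (2*n) = (2 / b : ℝ) ^ n * (b / 2) ^ n * x ^ (2*n) := by rw [h4, one_mul]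
        _ = (2 / b : ℝ) ^ n * ((b / 2) ^ n * x ^ (2*n)) := by ring
        _ ≤ (2 / b : ℝ) ^ n * (Real.exp (b / 2 * x ^ 2) * (n.factorial : ℝ)) := h3
        _ = (n.factorial : ℝ) * (2 / b) ^ n * Real.exp (b / 2 * x ^ 2) := by ring
    have hexp1 : Real.exp (b/2*x^2) * Real.exp (-b*x^2) = Real.exp (-(b/2)*x^2) := by
      rw [← Real.exp_add]; ring_nf
    have hexp2 : Real.exp (-b*x^2) ≤ Real.exp (-(b/2)*x^2) :=
      Real.exp_le_exp.mpr (by nlinarith [sq_nonneg x])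
    have hnorm : ‖x ^ n * Real.exp (-b * x ^ 2)‖ = |x| ^ n * Real.exp (-b * x ^ 2) := by
      rw [norm_mul, norm_pow, Real.norm_eq_abs, Real.norm_eq_abs, Real.abs_exp]
    rw [hnorm]
    calc |x| ^ n * Real.exp (-b * x ^ 2)
        ≤ (x ^ (2*n) + 1) * Real.exp (-b * x ^ 2) :=
          mul_le_mul_of_nonneg_right (abs_pow_le_aux n x) (Real.exp_pos _).le
      _ ≤ ((n.factorial : ℝ) * (2 / b) ^ n * Real.exp (b / 2 * x ^ 2) + 1) * Real.exp (-b * x ^ 2) :=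
          mul_le_mul_of_nonneg_right (by linarith) (Real.exp_pos _).le
      _ = (n.factorial : ℝ) * (2 / b) ^ n * (Real.exp (b/2*x^2) * Real.exp (-b*x^2))
          + Real.exp (-b*x^2) := by ring
      _ = (n.factorial : ℝ) * (2 / b) ^ n * Real.exp (-(b/2)*x^2) + Real.exp (-b*x^2) := by
          rw [hexp1]
      _ ≤ (n.factorial : ℝ) * (2 / b) ^ n * Real.exp (-(b/2)*x^2) + Real.exp (-(b/2)*x^2) := by
          have : (0:ℝ) ≤ (n.factorial : ℝ) * (2 / b) ^ n := by positivity
          linarith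
      _ = C * Real.exp (-(b/2) * x^2) := by rw [hC]; ring

lemma integrable_polyeval_mul_gaussian {b : ℝ} (hb : 0 < b) (q : Polynomial ℝ) :
    Integrable (fun x : ℝ => q.eval x * Real.exp (-b * x ^ 2)) := by
  induction q using Polynomial.induction_on' with
  | add p q hp hq =>
      exact (hp.add hq).congr (Filter.Eventually.of_forall fun x => by simp [add_mul])
  | monomial k a =>
      exact (((integrable_pow_mul_gaussian hb k).const_mul a).congr
        (Filter.Eventually.of_forall fun x => by simp [Polynomial.eval_monomial]; ring))

open Polynomial in
lemma integrable_polyeval_mul_gaussian' {β : ℝ} (hβ : 0 < β) (w : ℝ) (q : Polynomial ℝ) :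
    Integrable (fun v : ℝ => q.eval v * Real.exp (-((v - w) / β) ^ 2)) := by
  have hb : 0 < (β⁻¹) ^ 2 := by positivity
  have h := (integrable_polyeval_mul_gaussian hb (q.comp (X + C w))).comp_sub_right w
  refine h.congr (Filter.Eventually.of_forall fun v => ?_)
  dsimp only
  rw [Polynomial.eval_comp]
  simp only [Polynomial.eval_add, Polynomial.eval_X, Polynomial.eval_C, sub_add_cancel]
  congr 1
  ring

open Polynomial in
lemma integrable_aw_mul_poly {β : ℝ} (hβ : 0 < β) (w : ℝ) (m : ℕ) (q : Polynomial ℝ) :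
    Integrable (fun v : ℝ => awHermite β w m v * q.eval v) := by
  set K : ℝ := (Real.sqrt (Real.pi * 2 ^ m * (m.factorial : ℝ)))⁻¹
  have h := integrable_polyeval_mul_gaussian' hβ w
    (Polynomial.C K * ((PH m).comp (Polynomial.C β⁻¹ * (Polynomial.X - Polynomial.C w))) * q)
  refine h.congr (Filter.Eventually.of_forall fun v => ?_)
  dsimp only
  rw [Polynomial.eval_mul, Polynomial.eval_mul, Polynomial.eval_C, Polynomial.eval_comp]
  simp only [Polynomial.eval_mul, Polynomial.eval_sub, Polynomial.eval_X, Polynomial.eval_C]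
  rw [PH_eval, awHermite, div_eq_inv_mul]
  ring

/-- The weighted orthogonal projection between Hermite approximation spaces
preserves all polynomial moments up to degree `N`. -/
theorem projection_preserves_moments (N : ℕ) (α' α u' u : ℝ)
    (hα' : 0 < α') (hα : 0 < α) (f g : ℝ → ℝ) (c d : ℕ → ℝ)
    (hf : ∀ v : ℝ, f v = ∑ m ∈ Finset.range (N + 1), c m * awHermite α' u' m v)
    (hg : ∀ v : ℝ, g v = ∑ n ∈ Finset.range (N + 1), d n * awHermite α u n v)
    (horth : ∀ n ≤ N,
      (∫ v : ℝ, (g v - f v) * awHermite α u n v * hermiteWeight α u v) = 0)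
    (p : Polynomial ℝ) (hp : p.natDegree ≤ N) :
    (∫ v : ℝ, g v * p.eval v) = ∫ v : ℝ, f v * p.eval v := by
  classical
  -- integrability of f, g against any polynomial
  have hfint : ∀ q : Polynomial ℝ, Integrable (fun v : ℝ => f v * q.eval v) := by
    intro q
    have h : Integrable (fun v : ℝ =>
        ∑ m ∈ Finset.range (N + 1), c m * (awHermite α' u' m v * q.eval v)) :=
      integrable_finset_sum _ fun m _ => (integrable_aw_mul_poly hα' u' m q).const_mul (c m)
    refine h.congr (Filter.Eventually.of_forall fun v => ?_)
    dsimp only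
    rw [hf v, Finset.sum_mul]
    exact Finset.sum_congr rfl fun m _ => by ring
  have hgint : ∀ q : Polynomial ℝ, Integrable (fun v : ℝ => g v * q.eval v) := by
    intro q
    have h : Integrable (fun v : ℝ =>
        ∑ n ∈ Finset.range (N + 1), d n * (awHermite α u n v * q.eval v)) :=
      integrable_finset_sum _ fun n _ => (integrable_aw_mul_poly hα u n q).const_mul (d n)
    refine h.congr (Filter.Eventually.of_forall fun v => ?_)
    dsimp only
    rw [hg v, Finset.sum_mul]
    exact Finset.sum_congr rfl fun n _ => by ring
  have hDint : ∀ q : Polynomial ℝ, Integrable (fun v : ℝ => (g v - f v) * q.eval v) := by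
    intro q
    refine ((hgint q).sub (hfint q)).congr (Filter.Eventually.of_forall fun v => ?_)
    simp only [Pi.sub_apply]
    ring
  -- the composed Hermite polynomial and its basic facts
  have hαinv : (α : ℝ)⁻¹ ≠ 0 := by positivity
  set L : Polynomial ℝ := Polynomial.C α⁻¹ * (Polynomial.X - Polynomial.C u) with hL
  have hLdeg : L.natDegree = 1 := by
    rw [hL, Polynomial.natDegree_C_mul hαinv, Polynomial.natDegree_X_sub_C]
  have hLlead : L.leadingCoeff = α⁻¹ := by
    rw [hL, Polynomial.leadingCoeff_mul, Polynomial.leadingCoeff_C,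
      (Polynomial.monic_X_sub_C u).leadingCoeff, mul_one]
  set Q : ℕ → Polynomial ℝ := fun n => (PH n).comp L with hQ
  have hQdeg : ∀ n, (Q n).natDegree = n := by
    intro n
    rw [hQ]
    dsimp only
    rw [Polynomial.natDegree_comp, PH_natDegree, hLdeg, mul_one]
  have hQeval : ∀ n (v : ℝ), (Q n).eval v = physHermite n ((v - u) / α) := by
    intro n v
    rw [hQ]
    dsimp only
    rw [Polynomial.eval_comp, hL]
    simp only [Polynomial.eval_mul, Polynomial.eval_sub, Polynomial.eval_X, Polynomial.eval_C]
    rw [PH_eval, div_eq_inv_mul]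
  have hQcoeff : ∀ n, (Q n).coeff n = 2 ^ n * α⁻¹ ^ n := by
    intro n
    have h1 : (Q n).coeff n = (Q n).leadingCoeff := by
      rw [Polynomial.leadingCoeff, hQdeg]
    rw [h1, hQ]
    dsimp only
    rw [Polynomial.leadingCoeff_comp (by rw [hLdeg]; norm_num), PH_leadingCoeff, hLlead,
      PH_natDegree]
  have hQcoeff_ne : ∀ n, (Q n).coeff n ≠ 0 := by
    intro n
    rw [hQcoeff]
    positivity
  -- orthogonality in terms of Q
  have horth' : ∀ n ≤ N, (∫ v : ℝ, (g v - f v) * (Q n).eval v) = 0 := by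
    intro n hn
    have Kpos : 0 < (Real.sqrt (Real.pi * 2 ^ n * (n.factorial : ℝ)))⁻¹ *
        (Real.sqrt Real.pi * α⁻¹) := by
      have h1 : (0:ℝ) < Real.pi * 2 ^ n * (n.factorial : ℝ) := by positivity
      have h2 : (0:ℝ) < Real.sqrt (Real.pi * 2 ^ n * (n.factorial : ℝ)) := Real.sqrt_pos.mpr h1
      have h3 : (0:ℝ) < Real.sqrt Real.pi := Real.sqrt_pos.mpr Real.pi_pos
      positivity
    set K : ℝ := (Real.sqrt (Real.pi * 2 ^ n * (n.factorial : ℝ)))⁻¹ *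
        (Real.sqrt Real.pi * α⁻¹) with hK
    have key : ∀ v : ℝ, (g v - f v) * awHermite α u n v * hermiteWeight α u v
        = K * ((g v - f v) * (Q n).eval v) := by
      intro v
      have hexp : Real.exp (-((v - u) / α) ^ 2) * Real.exp (((v - u) / α) ^ 2) = 1 := by
        rw [← Real.exp_add, neg_add_cancel, Real.exp_zero]
      rw [hQeval, awHermite, hermiteWeight, hK]
      calc (g v - f v) * ((Real.sqrt (Real.pi * 2 ^ n * (n.factorial : ℝ)))⁻¹ *
              physHermite n ((v - u) / α) * Real.exp (-((v - u) / α) ^ 2)) *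
              (Real.sqrt Real.pi * α⁻¹ * Real.exp (((v - u) / α) ^ 2))
          = (Real.sqrt (Real.pi * 2 ^ n * (n.factorial : ℝ)))⁻¹ * (Real.sqrt Real.pi * α⁻¹) *
              ((g v - f v) * physHermite n ((v - u) / α)) *
              (Real.exp (-((v - u) / α) ^ 2) * Real.exp (((v - u) / α) ^ 2)) := by ring
        _ = (Real.sqrt (Real.pi * 2 ^ n * (n.factorial : ℝ)))⁻¹ * (Real.sqrt Real.pi * α⁻¹) *
              ((g v - f v) * physHermite n ((v - u) / α)) := by rw [hexp, mul_one]
    have h0 := horth n hn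
    rw [show (fun v : ℝ => (g v - f v) * awHermite α u n v * hermiteWeight α u v)
        = fun v : ℝ => K * ((g v - f v) * (Q n).eval v) from funext key] at h0
    rw [integral_const_mul] at h0
    exact (mul_eq_zero.mp h0).resolve_left (ne_of_gt Kpos)
  -- main induction: all moments of g - f vanish up to degree N
  have main : ∀ k, k ≤ N → ∀ q : Polynomial ℝ, q.natDegree ≤ k →
      (∫ v : ℝ, (g v - f v) * q.eval v) = 0 := by
    intro k
    induction k using Nat.strong_induction_on with
    | _ k ih =>
      intro hkN q hq
      set e : ℝ := q.coeff k / (Q k).coeff k with he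
      set r : Polynomial ℝ := q - Polynomial.C e * Q k with hr
      have hrk : r.coeff k = 0 := by
        rw [hr]
        simp only [Polynomial.coeff_sub, Polynomial.coeff_C_mul]
        rw [he, div_mul_cancel₀ _ (hQcoeff_ne k), sub_self]
      have hrdeg : ∀ M, k ≤ M → r.coeff M = 0 := by
        intro M hM
        rcases eq_or_lt_of_le hM with rfl | hlt
        · exact hrk
        · rw [hr]
          simp only [Polynomial.coeff_sub, Polynomial.coeff_C_mul]
          rw [Polynomial.coeff_eq_zero_of_natDegree_lt (lt_of_le_of_lt hq hlt),
            Polynomial.coeff_eq_zero_of_natDegree_lt (by rw [hQdeg]; exact hlt)]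
          ring
      have hrint : (∫ v : ℝ, (g v - f v) * r.eval v) = 0 := by
        rcases Nat.eq_zero_or_pos k with hk0 | hkpos
        · subst hk0
          have : r = 0 := by
            have h1 : r.natDegree ≤ 0 :=
              (Polynomial.natDegree_sub_le _ _).trans (by
                simp only [Nat.le_zero, Nat.max_eq_zero_iff]
                constructor
                · exact Nat.le_zero.mp hq
                · exact Nat.le_zero.mp ((Polynomial.natDegree_C_mul_le _ _).trans
                    (by rw [hQdeg])))
            have h2 := Polynomial.eq_C_of_natDegree_le_zero h1
            rw [h2, hrk, map_zero]
          rw [this]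
          simp
        · have hdeg : r.natDegree ≤ k - 1 := by
            rw [Polynomial.natDegree_le_iff_coeff_eq_zero]
            intro M hM
            exact hrdeg M (by omega)
          exact ih (k - 1) (by omega) (by omega) r hdeg
      have hsplit : (fun v : ℝ => (g v - f v) * q.eval v)
          = fun v : ℝ => (g v - f v) * r.eval v + e * ((g v - f v) * (Q k).eval v) := by
        funext v
        rw [hr]
        simp only [Polynomial.eval_sub, Polynomial.eval_mul, Polynomial.eval_C]
        ring
      rw [hsplit, integral_add (hDint r) (((hDint (Q k)).const_mul e)),
        integral_const_mul, hrint, horth' k hkN]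
      ring
  have h0 := main N le_rfl p hp
  have hsub : (fun v : ℝ => (g v - f v) * p.eval v)
      = fun v : ℝ => g v * p.eval v - f v * p.eval v := funext fun v => by ring
  rw [hsub, integral_sub (hgint p) (hfint p)] at h0
  linarith
end

section
/- Explicit formula for the transformation matrix, pure shift case: Let α', α > 0 and u', u ∈ ℝ with α = α' and u ≠ u', and set b := (u−u')/α', K_{n,m} := 2^{(m−n)/2}·(m!)^{−1/2}·(n!)^{1/2}. Then for all n, m ∈ ℕ with n ≥ m, ℙ_{n,m} = K_{n,m}·(−2b)^{n−m}/(n−m)!. -/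
open MeasureTheory Real Finset

/-- The coefficient `K_{n,m} = 2^{(m−n)/2} · (m!)^{−1/2} · (n!)^{1/2}`. -/
noncomputable def Kcoef (n m : ℕ) : ℝ :=
  (2 : ℝ) ^ (((m : ℝ) - (n : ℝ)) / 2) * (Real.sqrt (m.factorial : ℝ))⁻¹ *
    Real.sqrt (n.factorial : ℝ)

namespace TMAux
open Polynomial

noncomputable def hP : ℕ → Polynomial ℝ
  | 0 => 1
  | 1 => C 2 * X
  | (n + 2) => C 2 * X * hP (n + 1) - C (2 * ((n : ℝ) + 1)) * hP n

lemma hP_succ (n : ℕ) : hP (n + 1) = C 2 * X * hP n - C (2 * (n : ℝ)) * hP (n - 1) := by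
  cases n with
  | zero => simp [hP]
  | succ k =>
    show hP (k + 2) = _
    rw [hP]
    push_cast
    norm_num

lemma hP_eval : ∀ (n : ℕ) (x : ℝ), (hP n).eval x = physHermite n x
  | 0, x => by simp [hP, physHermite]
  | 1, x => by simp [hP, physHermite]
  | (n+2), x => by
      simp only [hP, physHermite, eval_sub, eval_mul, eval_C, eval_X,
        hP_eval (n+1) x, hP_eval n x]

lemma hP_derivative : ∀ n : ℕ, (hP n).derivative = C (2 * (n : ℝ)) * hP (n - 1)
  | 0 => by simp [hP]
  | 1 => by simp [hP]
  | (n+2) => by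
      have h1 := hP_derivative (n+1)
      have h2 := hP_succ (n+1)
      rw [show hP (n+2) = C 2 * X * hP (n + 1) - C (2 * ((n : ℝ) + 1)) * hP n from rfl,
        derivative_sub, derivative_mul, derivative_mul, derivative_C, derivative_X,
        derivative_mul, derivative_C, h1, hP_derivative n]
      simp only [Nat.add_sub_cancel]
      have key : C (2 * ((n:ℝ) + 2)) * hP (n+1)
          = C 2 * hP (n+1) + C (2*((n:ℝ)+1)) * (C 2 * X * hP n - C (2 * (n:ℝ)) * hP (n-1)) := by
        rw [← hP_succ n, show (2*((n:ℝ)+2)) = 2 + 2*((n:ℝ)+1) by ring, C_add, add_mul]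
      push_cast
      push_cast at key
      rw [key]
      ring
end TMAux

open Polynomial

lemma integrable_poly_gauss (p : Polynomial ℝ) :
    Integrable fun x : ℝ => p.eval x * Real.exp (-x ^ 2) := by
  have hmono : ∀ k : ℕ, Integrable fun x : ℝ => x ^ k * Real.exp (-x ^ 2) := by
    intro k
    have h := integrable_rpow_mul_exp_neg_mul_sq (b := (1:ℝ)) one_pos
      (s := (k : ℝ)) (by exact lt_of_lt_of_le (by norm_num) (Nat.cast_nonneg k))
    refine h.congr (Filter.Eventually.of_forall fun x => ?_)
    simp [Real.rpow_natCast]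
  have heq : (fun x : ℝ => p.eval x * Real.exp (-x ^ 2))
      = fun x => ∑ i ∈ Finset.range (p.natDegree + 1), p.coeff i * x ^ i * Real.exp (-x ^ 2) := by
    funext x
    rw [Polynomial.eval_eq_sum_range, Finset.sum_mul]
  rw [heq]
  refine integrable_finset_sum _ fun i _ => ?_
  simpa [mul_assoc] using (hmono i).const_mul (p.coeff i)

lemma integrable_pq (p q : Polynomial ℝ) (b : ℝ) :
    Integrable fun y : ℝ => p.eval y * q.eval (y - b) * Real.exp (-y ^ 2) := by
  refine (integrable_poly_gauss (p * q.comp (X - C b))).congr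
    (Filter.Eventually.of_forall fun y => ?_)
  simp [Polynomial.eval_comp]

noncomputable def Jg (b : ℝ) (p q : Polynomial ℝ) : ℝ :=
  ∫ y : ℝ, p.eval y * q.eval (y - b) * Real.exp (-y ^ 2)

lemma Jg_sub_left (b : ℝ) (p₁ p₂ q : Polynomial ℝ) :
    Jg b (p₁ - p₂) q = Jg b p₁ q - Jg b p₂ q := by
  unfold Jg
  rw [← integral_sub (integrable_pq p₁ q b) (integrable_pq p₂ q b)]
  congr 1; funext y; simp; ring

lemma Jg_sub_right (b : ℝ) (p q₁ q₂ : Polynomial ℝ) :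
    Jg b p (q₁ - q₂) = Jg b p q₁ - Jg b p q₂ := by
  unfold Jg
  rw [← integral_sub (integrable_pq p q₁ b) (integrable_pq p q₂ b)]
  congr 1; funext y; simp; ring

lemma Jg_Cmul_left (b c : ℝ) (p q : Polynomial ℝ) :
    Jg b (C c * p) q = c * Jg b p q := by
  unfold Jg
  rw [← integral_const_mul]
  congr 1; funext y; simp; ring

lemma Jg_Cmul_right (b c : ℝ) (p q : Polynomial ℝ) :
    Jg b p (C c * q) = c * Jg b p q := by
  unfold Jg
  rw [← integral_const_mul]
  congr 1; funext y; simp; ring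

lemma Jg_zero_left (b : ℝ) (q : Polynomial ℝ) : Jg b 0 q = 0 := by
  unfold Jg; simp

lemma Jg_ibp (b : ℝ) (p q : Polynomial ℝ) :
    Jg b (C 2 * X * p) q = Jg b p.derivative q + Jg b p q.derivative := by
  have hF : ∀ y : ℝ, HasDerivAt (fun y : ℝ => p.eval y * q.eval (y - b) * Real.exp (-y ^ 2))
      ((p.derivative.eval y * q.eval (y - b) + p.eval y * q.derivative.eval (y - b)
        - 2 * y * (p.eval y * q.eval (y - b))) * Real.exp (-y ^ 2)) y := by
    intro y
    have hp : HasDerivAt (fun y : ℝ => p.eval y) (p.derivative.eval y) y := p.hasDerivAt y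
    have hq : HasDerivAt (fun y : ℝ => q.eval (y - b)) (q.derivative.eval (y - b)) y := by
      simpa [Function.comp_def] using (q.hasDerivAt (y - b)).comp y ((hasDerivAt_id y).sub_const b)
    have he : HasDerivAt (fun y : ℝ => Real.exp (-y ^ 2)) (Real.exp (-y ^ 2) * (-(2 * y))) y := by
      have hin : HasDerivAt (fun y : ℝ => -y ^ 2) (-(2 * y)) y := by
        simpa using (hasDerivAt_pow 2 y).fun_neg
      exact hin.exp
    have := (hp.fun_mul hq).fun_mul he
    refine this.congr_deriv ?_
    ring
  have hzero : ∫ y : ℝ, (p.derivative.eval y * q.eval (y - b) + p.eval y * q.derivative.eval (y - b)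
      - 2 * y * (p.eval y * q.eval (y - b))) * Real.exp (-y ^ 2) = 0 := by
    refine integral_eq_zero_of_hasDerivAt_of_integrable hF ?_ (integrable_pq p q b)
    refine (integrable_poly_gauss (derivative p * q.comp (X - C b) + p * (derivative q).comp (X - C b)
      - C 2 * X * (p * q.comp (X - C b)))).congr (Filter.Eventually.of_forall fun y => ?_)
    simp only [eval_add, eval_sub, eval_mul, eval_C, eval_X, Polynomial.eval_comp]
  have hsplit : ∫ y : ℝ, (p.derivative.eval y * q.eval (y - b) + p.eval y * q.derivative.eval (y - b)
      - 2 * y * (p.eval y * q.eval (y - b))) * Real.exp (-y ^ 2)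
      = Jg b p.derivative q + Jg b p q.derivative - Jg b (C 2 * X * p) q := by
    unfold Jg
    have hfun : (fun y : ℝ => (p.derivative.eval y * q.eval (y - b)
          + p.eval y * q.derivative.eval (y - b)
          - 2 * y * (p.eval y * q.eval (y - b))) * Real.exp (-y ^ 2))
        = fun y : ℝ => (p.derivative.eval y * q.eval (y - b) * Real.exp (-y ^ 2)
            + p.eval y * q.derivative.eval (y - b) * Real.exp (-y ^ 2))
          - (C 2 * X * p).eval y * q.eval (y - b) * Real.exp (-y ^ 2) := by
      funext y; simp; ring
    have h12 : Integrable (fun y : ℝ => p.derivative.eval y * q.eval (y - b) * Real.exp (-y ^ 2)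
        + p.eval y * q.derivative.eval (y - b) * Real.exp (-y ^ 2)) :=
      (integrable_pq p.derivative q b).add (integrable_pq p q.derivative b)
    rw [hfun, integral_sub h12 (integrable_pq (C 2 * X * p) q b),
      integral_add (integrable_pq p.derivative q b) (integrable_pq p q.derivative b)]
  rw [hsplit] at hzero
  linarith

lemma Jg_Xmul_right (b : ℝ) (p q : Polynomial ℝ) :
    Jg b p (C 2 * X * q) = Jg b (C 2 * X * p) q - 2 * b * Jg b p q := by
  unfold Jg
  rw [← integral_const_mul, ← integral_sub (integrable_pq (C 2 * X * p) q b)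
    (((integrable_pq p q b)).const_mul (2 * b))]
  congr 1; funext y; simp; ring

lemma Jg_step (b : ℝ) (m n : ℕ) :
    Jg b (TMAux.hP (m+1)) (TMAux.hP n) = 2 * n * Jg b (TMAux.hP m) (TMAux.hP (n-1)) := by
  rw [TMAux.hP_succ m, Jg_sub_left, Jg_Cmul_left, Jg_ibp, TMAux.hP_derivative m,
    TMAux.hP_derivative n, Jg_Cmul_left, Jg_Cmul_right]
  ring

lemma Jg_zero_succ (b : ℝ) (n : ℕ) :
    Jg b (TMAux.hP 0) (TMAux.hP (n+1)) = -(2*b) * Jg b (TMAux.hP 0) (TMAux.hP n) := by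
  rw [TMAux.hP_succ n, Jg_sub_right, Jg_Cmul_right, Jg_Xmul_right, Jg_ibp,
    TMAux.hP_derivative n, Jg_Cmul_right]
  rw [show (TMAux.hP 0) = 1 from rfl, derivative_one, Jg_zero_left]
  ring

lemma Jg_one_one (b : ℝ) : Jg b (TMAux.hP 0) (TMAux.hP 0) = Real.sqrt Real.pi := by
  unfold Jg
  rw [show (TMAux.hP 0) = 1 from rfl]
  simp only [eval_one, one_mul]
  have := integral_gaussian 1
  simpa using this

lemma Jg_row0 (b : ℝ) (n : ℕ) :
    Jg b (TMAux.hP 0) (TMAux.hP n) = Real.sqrt Real.pi * (-(2*b))^n := by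
  induction n with
  | zero => simp [Jg_one_one]
  | succ k ih => rw [Jg_zero_succ, ih]; ring

lemma Jg_main (b : ℝ) : ∀ m n : ℕ, m ≤ n →
    Jg b (TMAux.hP m) (TMAux.hP n)
      = 2^m * ((n.factorial : ℝ) / ((n - m).factorial : ℝ))
        * (Real.sqrt Real.pi * (-(2*b))^(n-m)) := by
  intro m
  induction m with
  | zero =>
    intro n _
    rw [Jg_row0]
    simp [div_self (by exact_mod_cast n.factorial_ne_zero : ((n.factorial : ℝ)) ≠ 0)]
  | succ m ih =>
    intro n h
    obtain ⟨k, rfl⟩ : ∃ k, n = k + 1 := ⟨n - 1, by omega⟩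
    rw [Jg_step]
    simp only [Nat.add_sub_cancel, Nat.succ_sub_succ, Nat.sub_zero]
    rw [ih k (by omega)]
    rw [Nat.factorial_succ]
    push_cast
    ring


lemma rpow_half_eq_sqrt_pow (m : ℕ) : (2:ℝ) ^ ((m:ℝ)/2) = Real.sqrt ((2:ℝ)^m) := by
  rw [Real.sqrt_eq_rpow, ← Real.rpow_natCast 2 m, ← Real.rpow_mul (by norm_num), mul_one_div]

lemma keyNum (n m : ℕ) :
    (Real.sqrt (Real.pi * 2^m * (m.factorial:ℝ)))⁻¹
      * (Real.sqrt (Real.pi * 2^n * (n.factorial:ℝ)))⁻¹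
      * Real.sqrt Real.pi * Real.sqrt Real.pi * 2^m * (n.factorial:ℝ) = Kcoef n m := by
  have hm : (0:ℝ) < (m.factorial:ℝ) := by exact_mod_cast m.factorial_pos
  have hn : (0:ℝ) < (n.factorial:ℝ) := by exact_mod_cast n.factorial_pos
  have h2m : (0:ℝ) ≤ 2^m := by positivity
  have h2n : (0:ℝ) ≤ 2^n := by positivity
  rw [Real.sqrt_mul (by positivity) (m.factorial:ℝ), Real.sqrt_mul Real.pi_pos.le,
      Real.sqrt_mul (by positivity) (n.factorial:ℝ), Real.sqrt_mul Real.pi_pos.le]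
  rw [Kcoef, show ((m:ℝ)-(n:ℝ))/2 = (m:ℝ)/2 - (n:ℝ)/2 by ring, Real.rpow_sub two_pos,
      rpow_half_eq_sqrt_pow, rpow_half_eq_sqrt_pow]
  have hA : (0:ℝ) < Real.sqrt Real.pi := Real.sqrt_pos.mpr Real.pi_pos
  have hB : (0:ℝ) < Real.sqrt ((2:ℝ)^m) := Real.sqrt_pos.mpr (by positivity)
  have hD : (0:ℝ) < Real.sqrt ((2:ℝ)^n) := Real.sqrt_pos.mpr (by positivity)
  have hC : (0:ℝ) < Real.sqrt (m.factorial:ℝ) := Real.sqrt_pos.mpr hm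
  have hE : (0:ℝ) < Real.sqrt (n.factorial:ℝ) := Real.sqrt_pos.mpr hn
  have hBB : Real.sqrt ((2:ℝ)^m) * Real.sqrt ((2:ℝ)^m) = 2^m := Real.mul_self_sqrt h2m
  have hEE : Real.sqrt ((n.factorial:ℝ)) * Real.sqrt ((n.factorial:ℝ)) = (n.factorial:ℝ) :=
    Real.mul_self_sqrt hn.le
  set A := Real.sqrt Real.pi with hA'
  set B := Real.sqrt ((2:ℝ)^m) with hB'
  set D := Real.sqrt ((2:ℝ)^n) with hD'
  set C := Real.sqrt ((m.factorial:ℝ)) with hC'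
  set E := Real.sqrt ((n.factorial:ℝ)) with hE'
  rw [← hBB, ← hEE]
  field_simp


/-- Explicit formula for the transformation matrix, pure shift case
(`α = α'` and `u ≠ u'`). -/
theorem transferMatrix_pure_shift (α' α u' u : ℝ) (hα' : 0 < α') (hα : 0 < α)
    (hαeq : α = α') (hune : u ≠ u') (b : ℝ) (hb : b = (u - u') / α')
    (n m : ℕ) (hnm : m ≤ n) :
    transferMatrix α' u' α u n m
      = Kcoef n m * (-(2 * b)) ^ (n - m) / ((n - m).factorial : ℝ) := by
  subst hαeq
  have hα0 : α ≠ 0 := ne_of_gt hα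
  have hbshift : ∀ v : ℝ, (v - u)/α = (v - u')/α - b := by
    intro v; rw [hb]; field_simp; ring
  have hpt : ∀ v : ℝ, awHermite α u' m v * awHermite α u n v * hermiteWeight α u v
      = ((Real.sqrt (Real.pi * 2^m * (m.factorial:ℝ)))⁻¹
          * (Real.sqrt (Real.pi * 2^n * (n.factorial:ℝ)))⁻¹ * Real.sqrt Real.pi * α⁻¹)
        * ((TMAux.hP m).eval ((v - u')/α) * (TMAux.hP n).eval ((v - u')/α - b)
            * Real.exp (-((v - u')/α)^2)) := by
    intro v
    unfold awHermite hermiteWeight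
    rw [← hbshift v, TMAux.hP_eval, TMAux.hP_eval, Real.exp_neg, Real.exp_neg]
    have h1 := Real.exp_ne_zero (((v - u)/α)^2)
    have h2 := Real.exp_ne_zero (((v - u')/α)^2)
    field_simp
  unfold transferMatrix
  simp_rw [hpt]
  rw [integral_const_mul]
  rw [show (fun v : ℝ => (TMAux.hP m).eval ((v - u')/α) * (TMAux.hP n).eval ((v - u')/α - b)
      * Real.exp (-((v - u')/α)^2))
    = fun v : ℝ => (fun w : ℝ => (TMAux.hP m).eval (w/α) * (TMAux.hP n).eval (w/α - b)
      * Real.exp (-(w/α)^2)) (v - u') from rfl]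
  rw [integral_sub_right_eq_self (μ := volume) (fun w : ℝ => (TMAux.hP m).eval (w/α)
      * (TMAux.hP n).eval (w/α - b) * Real.exp (-(w/α)^2)) u']
  rw [show (fun w : ℝ => (TMAux.hP m).eval (w/α) * (TMAux.hP n).eval (w/α - b)
      * Real.exp (-(w/α)^2))
    = fun w : ℝ => (fun y : ℝ => (TMAux.hP m).eval y * (TMAux.hP n).eval (y - b)
      * Real.exp (-y^2)) (w/α) from rfl]
  rw [MeasureTheory.Measure.integral_comp_div (fun y : ℝ => (TMAux.hP m).eval y
      * (TMAux.hP n).eval (y - b) * Real.exp (-y^2)) α]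
  rw [show (∫ y : ℝ, (TMAux.hP m).eval y * (TMAux.hP n).eval (y - b) * Real.exp (-y^2))
      = Jg b (TMAux.hP m) (TMAux.hP n) from rfl]
  rw [Jg_main b m n hnm, smul_eq_mul, abs_of_pos hα]
  have hfne : ((n - m).factorial : ℝ) ≠ 0 := by exact_mod_cast (n - m).factorial_ne_zero
  calc (Real.sqrt (Real.pi * 2^m * (m.factorial:ℝ)))⁻¹
        * (Real.sqrt (Real.pi * 2^n * (n.factorial:ℝ)))⁻¹ * Real.sqrt Real.pi * α⁻¹
        * (α * (2^m * ((n.factorial:ℝ) / ((n - m).factorial:ℝ))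
          * (Real.sqrt Real.pi * (-(2*b))^(n-m))))
      = ((Real.sqrt (Real.pi * 2^m * (m.factorial:ℝ)))⁻¹
          * (Real.sqrt (Real.pi * 2^n * (n.factorial:ℝ)))⁻¹
          * Real.sqrt Real.pi * Real.sqrt Real.pi * 2^m * (n.factorial:ℝ))
        * ((-(2*b))^(n-m) / ((n - m).factorial:ℝ)) * (α⁻¹ * α) := by ring
    _ = Kcoef n m * (-(2 * b)) ^ (n - m) / ((n - m).factorial : ℝ) := by
        rw [keyNum, inv_mul_cancel₀ hα0, mul_one, mul_div_assoc]
end
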